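/- arXiv:2502.09907 — 3 statements merged into one kernel-verified Lean document; each statement's English description precedes it below -/
import Mathlib

section
/- For every probability measure F on [0,1] (the value distribution) and every bidding strategy s (a Markov kernel from [0,1] to [0,1]) such that the induced bid distribution P_{s,F} is absolutely continuous with respect to Lebesgue measure, the worst-case regret satisfies: sup over all probability measures H on [0,1] of Reg_F(s,H) equals sup over h in [0,1] of Reg_F(s,δ_h), which in turn equals sup over h in [0,1] of ( E_{v∼F}[(v−h)·1{v≥h}] − U_F(s,δ_h) ). -/
open MeasureTheory ProbabilityTheory Set

noncomputable section

namespace FPA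

/-- The unit interval `[0,1] ⊆ ℝ`. -/
def Iu : Set ℝ := Set.Icc 0 1

/-- `μ` is a probability measure on `[0,1]`. -/
def IsProbOn (μ : Measure ℝ) : Prop := IsProbabilityMeasure μ ∧ μ Iu = 1

/-- A bidding strategy: a Markov kernel from `[0,1]` to `[0,1]`. -/
def IsStrategy (s : Kernel ℝ ℝ) : Prop := IsMarkovKernel s ∧ ∀ v : ℝ, s v Iu = 1

/-- The buyer's utility `u(b,h;v) = (v−b)·1{b ≥ h}`. -/
def util (b h v : ℝ) : ℝ := (v - b) * (if h ≤ b then 1 else 0)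

/-- Expected utility `U_F(s,H)`. -/
def eUtil (F : Measure ℝ) (s : Kernel ℝ ℝ) (H : Measure ℝ) : ℝ :=
  ∫ v, ∫ h, ∫ b, util b h v ∂(s v) ∂H ∂F

/-- Regret `Reg_F(s,H) = sup_{s'∈S} U_F(s',H) − U_F(s,H)`. -/
def regret (F : Measure ℝ) (s : Kernel ℝ ℝ) (H : Measure ℝ) : ℝ :=
  (⨆ s' : {k : Kernel ℝ ℝ // IsStrategy k}, eUtil F s'.1 H) - eUtil F s H

/-- Induced bid distribution `P_{s,F}`. -/
def bidDist (F : Measure ℝ) (s : Kernel ℝ ℝ) : Measure ℝ := F.bind (fun v => s v)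

/-- CDF of a measure on `[0,1]`: `F(x) = F([0,x])`. -/
def cdf01 (F : Measure ℝ) (x : ℝ) : ℝ := (F (Set.Iic x)).toReal

/-- Generalized inverse `F⁻(t) = inf {x ∈ [0,1] : F(x) ≥ t}`. -/
def qinv (F : Measure ℝ) (t : ℝ) : ℝ := sInf {x | x ∈ Iu ∧ t ≤ cdf01 F x}

/-- Full-information benchmark against a deterministic highest competing bid `h`. -/
def bench (F : Measure ℝ) (h : ℝ) : ℝ := ∫ v, (v - h) * (if h ≤ v then 1 else 0) ∂F

/-- Full-information regret `R_F(s,H)`. -/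
def fregret (F : Measure ℝ) (s : Kernel ℝ ℝ) (H : Measure ℝ) : ℝ :=
  (∫ h, bench F h ∂H) - eUtil F s H

/-- Absolute continuity of a function on `[0,1]` (FTC characterization). -/
def AbsContOn01 (f : ℝ → ℝ) : Prop :=
  ∃ g : ℝ → ℝ, IntervalIntegrable g volume 0 1 ∧
    ∀ x ∈ Iu, f x = f 0 + ∫ t in (0:ℝ)..x, g t

/-- The set of quantiles corresponding to value `v`: `Y(v) = {y ∈ [0,1] : F⁻(y) = v}`. -/
def Yset (F : Measure ℝ) (v : ℝ) : Set ℝ := {y | y ∈ Iu ∧ qinv F y = v}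

/-- Uniform distribution on a set `A ⊆ ℝ`. -/
def unifOn (A : Set ℝ) : Measure ℝ := (volume A)⁻¹ • volume.restrict A

/-- `s` is the bidding strategy corresponding to the quantile-based bidding strategy `Q`:
it bids `Q(F(v))` when `F({v}) = 0`, and the pushforward under `Q` of the uniform
distribution on `Y(v)` when `F({v}) > 0`. -/
def IsQuantileStrategy (F : Measure ℝ) (Q : ℝ → ℝ) (s : Kernel ℝ ℝ) : Prop :=
  IsStrategy s ∧ ∀ v ∈ Iu,
    s v = if F {v} = 0 then Measure.dirac (Q (cdf01 F v)) else (unifOn (Yset F v)).map Q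

/-- The candidate worst-case highest-competing-bid CDF
`H*(x) = exp(−∫_{(Q*)⁻¹(x)}^1 dt/(1−F(Q*(t))))`. -/
def Hstar (F : Measure ℝ) (Q : ℝ → ℝ) (x : ℝ) : ℝ :=
  Real.exp (-(∫ t in (Function.invFunOn Q Iu x)..(1:ℝ), 1 / (1 - cdf01 F (Q t))))



/-! ### Auxiliary lemmas -/

section Aux

lemma zero_mem_Iu : (0:ℝ) ∈ Iu := ⟨le_refl 0, zero_le_one⟩

lemma measurableSet_Iu : MeasurableSet Iu := measurableSet_Icc

lemma util_le_max (b h v : ℝ) : util b h v ≤ max (v - h) 0 := by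
  unfold util
  split_ifs with hb
  · rw [mul_one]; exact le_max_of_le_left (by linarith)
  · rw [mul_zero]; exact le_max_right _ _

lemma abs_util_le {b : ℝ} (hb : b ∈ Iu) (h v : ℝ) : |util b h v| ≤ |v| + 1 := by
  obtain ⟨hb0, hb1⟩ := hb
  unfold util
  split_ifs with hbh
  · rw [mul_one]
    have h1 : |v - b| ≤ |v| + |b| := abs_sub v b
    have h2 : |b| ≤ 1 := abs_le.mpr ⟨by linarith, hb1⟩
    linarith
  · rw [mul_zero]; simp; positivity

lemma Iu_compl_zero {μ : Measure ℝ} [IsProbabilityMeasure μ] (hμ : μ Iu = 1) : μ Iuᶜ = 0 := by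
  rw [measure_compl measurableSet_Iu (measure_ne_top μ _), hμ, measure_univ, tsub_self]

lemma ae_mem_Iu {μ : Measure ℝ} [IsProbabilityMeasure μ] (hμ : μ Iu = 1) :
    ∀ᵐ x ∂μ, x ∈ Iu := by
  refine ae_iff.mpr ?_
  have : {x : ℝ | ¬ x ∈ Iu} = Iuᶜ := rfl
  rw [this, Iu_compl_zero hμ]

lemma ae_fst_mem_Iu {F H : Measure ℝ} [IsProbabilityMeasure F] [IsProbabilityMeasure H]
    (hF : F Iu = 1) : ∀ᵐ p : ℝ × ℝ ∂F.prod H, p.1 ∈ Iu := by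
  have h0 : (F.prod H) (Iuᶜ ×ˢ (univ : Set ℝ)) = 0 := by
    rw [Measure.prod_prod, Iu_compl_zero hF, zero_mul]
  refine ae_iff.mpr ?_
  have : {p : ℝ × ℝ | ¬ p.1 ∈ Iu} = Iuᶜ ×ˢ univ := by ext p; simp
  rw [this, h0]

lemma measurable_util_vhb : Measurable fun q : (ℝ × ℝ) × ℝ => util q.2 q.1.2 q.1.1 := by
  unfold util
  exact ((measurable_fst.comp measurable_fst).sub measurable_snd).mul
    (Measurable.ite (measurableSet_le (measurable_snd.comp measurable_fst) measurable_snd)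
      measurable_const measurable_const)

/-- `Phi k v h = ∫ b, util b h v ∂(k v)`. -/
def Phi (k : Kernel ℝ ℝ) (v h : ℝ) : ℝ := ∫ b, util b h v ∂(k v)

lemma stronglyMeasurable_Phi (k : Kernel ℝ ℝ) [IsSFiniteKernel k] :
    StronglyMeasurable (fun p : ℝ × ℝ => Phi k p.1 p.2) := by
  have h1 : StronglyMeasurable (fun q : (ℝ × ℝ) × ℝ => util q.2 q.1.2 q.1.1) :=
    measurable_util_vhb.stronglyMeasurable
  have h2 := h1.integral_kernel_prod_right' (κ := k.comap Prod.fst measurable_fst)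
  simp only [Kernel.comap_apply] at h2
  exact h2

lemma sm_Phi_v (k : Kernel ℝ ℝ) [IsSFiniteKernel k] (h : ℝ) :
    StronglyMeasurable (fun v => Phi k v h) :=
  (stronglyMeasurable_Phi k).comp_measurable (measurable_id.prodMk measurable_const)

lemma integrable_util_kernel {k : Kernel ℝ ℝ} (hk : IsStrategy k) (v h : ℝ) :
    Integrable (fun b => util b h v) (k v) := by
  haveI := hk.1
  have hmeas : Measurable fun b => util b h v := by
    unfold util
    exact (measurable_const.sub measurable_id).mul
      (Measurable.ite (measurableSet_le measurable_const measurable_id)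
        measurable_const measurable_const)
  refine (integrable_const (|v| + 1)).mono' hmeas.aestronglyMeasurable ?_
  filter_upwards [ae_mem_Iu (hk.2 v)] with b hb
  rw [Real.norm_eq_abs]
  exact abs_util_le hb h v

lemma Phi_le_max {k : Kernel ℝ ℝ} (hk : IsStrategy k) (v h : ℝ) :
    Phi k v h ≤ max (v - h) 0 := by
  haveI := hk.1
  have h1 : Phi k v h ≤ ∫ _, max (v - h) 0 ∂(k v) :=
    integral_mono (integrable_util_kernel hk v h) (integrable_const _)
      (fun b => util_le_max b h v)
  simpa using h1

lemma abs_Phi_le {k : Kernel ℝ ℝ} (hk : IsStrategy k) (v h : ℝ) :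
    |Phi k v h| ≤ |v| + 1 := by
  haveI := hk.1
  have h1 : ‖∫ b, util b h v ∂(k v)‖ ≤ (|v| + 1) * ((k v) univ).toReal := by
    refine norm_integral_le_of_norm_le_const ?_
    filter_upwards [ae_mem_Iu (hk.2 v)] with b hb
    rw [Real.norm_eq_abs]
    exact abs_util_le hb h v
  simpa [measure_univ, Phi] using h1

/-- `gfun F k h = eUtil F k (dirac h)`. -/
def gfun (F : Measure ℝ) (k : Kernel ℝ ℝ) (h : ℝ) : ℝ := ∫ v, Phi k v h ∂F

lemma eUtil_dirac (F : Measure ℝ) (k : Kernel ℝ ℝ) (h : ℝ) :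
    eUtil F k (Measure.dirac h) = gfun F k h := by
  unfold eUtil gfun Phi
  exact integral_congr_ae (Filter.Eventually.of_forall fun v =>
    integral_dirac (fun h' => ∫ b, util b h' v ∂(k v)) h)

lemma integrable_Phi_F {F : Measure ℝ} (hF : IsProbOn F) {k : Kernel ℝ ℝ}
    (hk : IsStrategy k) (h : ℝ) : Integrable (fun v => Phi k v h) F := by
  haveI := hF.1; haveI := hk.1
  refine (integrable_const (2:ℝ)).mono' (sm_Phi_v k h).aestronglyMeasurable ?_
  filter_upwards [ae_mem_Iu hF.2] with v hv
  rw [Real.norm_eq_abs]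
  have h1 := abs_Phi_le hk v h
  have h2 : |v| ≤ 1 := abs_le.mpr ⟨by linarith [hv.1], hv.2⟩
  linarith

lemma bench_eq_max (F : Measure ℝ) (h : ℝ) : bench F h = ∫ v, max (v - h) 0 ∂F := by
  unfold bench
  congr 1
  funext v
  split_ifs with hv
  · rw [mul_one]; exact (max_eq_left (by linarith)).symm
  · rw [mul_zero]; exact (max_eq_right (by linarith)).symm

lemma integrable_max_F {F : Measure ℝ} (hF : IsProbOn F) (h : ℝ) :
    Integrable (fun v => max (v - h) 0) F := by
  haveI := hF.1
  refine (integrable_const (1 + |h|)).mono'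
    (((measurable_id.sub measurable_const).max measurable_const).aestronglyMeasurable) ?_
  filter_upwards [ae_mem_Iu hF.2] with v hv
  rw [Real.norm_eq_abs, abs_of_nonneg (le_max_right _ _)]
  exact max_le (by linarith [hv.2, neg_abs_le h]) (by positivity)

lemma gfun_le_bench {F : Measure ℝ} (hF : IsProbOn F) {k : Kernel ℝ ℝ}
    (hk : IsStrategy k) (h : ℝ) : gfun F k h ≤ bench F h := by
  rw [bench_eq_max]
  exact integral_mono (integrable_Phi_F hF hk h) (integrable_max_F hF h)
    (fun v => Phi_le_max hk v h)

lemma abs_gfun_le {F : Measure ℝ} (hF : IsProbOn F) {k : Kernel ℝ ℝ}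
    (hk : IsStrategy k) (h : ℝ) : |gfun F k h| ≤ 2 := by
  haveI := hF.1
  have h1 : ‖∫ v, Phi k v h ∂F‖ ≤ 2 * (F univ).toReal := by
    refine norm_integral_le_of_norm_le_const ?_
    filter_upwards [ae_mem_Iu hF.2] with v hv
    rw [Real.norm_eq_abs]
    have h2 := abs_Phi_le hk v h
    have h3 : |v| ≤ 1 := abs_le.mpr ⟨by linarith [hv.1], hv.2⟩
    linarith
  simpa [measure_univ, gfun] using h1

lemma bench_antitone {F : Measure ℝ} (hF : IsProbOn F) : Antitone (bench F) := by
  intro h1 h2 hle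
  rw [bench_eq_max, bench_eq_max]
  exact integral_mono (integrable_max_F hF h2) (integrable_max_F hF h1)
    (fun v => max_le_max (by linarith) le_rfl)

lemma abs_bench_le {F : Measure ℝ} (hF : IsProbOn F) {h : ℝ} (hh : 0 ≤ h) :
    |bench F h| ≤ 1 := by
  haveI := hF.1
  rw [bench_eq_max]
  have h1 : ‖∫ v, max (v - h) 0 ∂F‖ ≤ 1 * (F univ).toReal := by
    refine norm_integral_le_of_norm_le_const ?_
    filter_upwards [ae_mem_Iu hF.2] with v hv
    rw [Real.norm_eq_abs, abs_of_nonneg (le_max_right _ _)]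
    exact max_le (by linarith [hv.2]) zero_le_one
  simpa [measure_univ] using h1

lemma integrable_bench_H {F : Measure ℝ} (hF : IsProbOn F) {H : Measure ℝ}
    (hH : IsProbOn H) : Integrable (bench F) H := by
  haveI := hH.1
  refine (integrable_const (1:ℝ)).mono'
    ((bench_antitone hF).measurable.aestronglyMeasurable) ?_
  filter_upwards [ae_mem_Iu hH.2] with h hh
  rw [Real.norm_eq_abs]
  exact abs_bench_le hF hh.1

lemma sm_gfun {F : Measure ℝ} (hF : IsProbOn F) (k : Kernel ℝ ℝ) [IsSFiniteKernel k] :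
    StronglyMeasurable (gfun F k) := by
  haveI := hF.1
  have h1 : StronglyMeasurable (fun p : ℝ × ℝ => Phi k p.2 p.1) :=
    (stronglyMeasurable_Phi k).comp_measurable measurable_swap
  exact h1.integral_prod_right'

lemma integrable_gfun_H {F : Measure ℝ} (hF : IsProbOn F) {k : Kernel ℝ ℝ}
    (hk : IsStrategy k) {H : Measure ℝ} (hH : IsProbOn H) :
    Integrable (gfun F k) H := by
  haveI := hH.1; haveI := hk.1
  refine (integrable_const (2:ℝ)).mono' (sm_gfun hF k).aestronglyMeasurable ?_
  refine Filter.Eventually.of_forall fun h => ?_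
  rw [Real.norm_eq_abs]
  exact abs_gfun_le hF hk h

lemma eUtil_eq_int_gfun {F : Measure ℝ} (hF : IsProbOn F) {k : Kernel ℝ ℝ}
    (hk : IsStrategy k) {H : Measure ℝ} (hH : IsProbOn H) :
    eUtil F k H = ∫ h, gfun F k h ∂H := by
  haveI := hF.1; haveI := hH.1; haveI := hk.1
  have hint : Integrable (Function.uncurry fun v h => Phi k v h) (F.prod H) := by
    refine (integrable_const (2:ℝ)).mono'
      ((stronglyMeasurable_Phi k).aestronglyMeasurable) ?_
    filter_upwards [ae_fst_mem_Iu hF.2] with p hp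
    rw [Real.norm_eq_abs]
    have h1 := abs_Phi_le hk p.1 p.2
    have h2 : |p.1| ≤ 1 := abs_le.mpr ⟨by linarith [hp.1], hp.2⟩
    calc |Phi k p.1 p.2| ≤ |p.1| + 1 := h1
    _ ≤ 2 := by linarith
  have h1 : eUtil F k H = ∫ v, ∫ h, Phi k v h ∂H ∂F := rfl
  rw [h1]
  exact integral_integral_swap hint

/-- The optimal strategy against a deterministic bid `h`. -/
def qstar (h : ℝ) : ℝ → ℝ := fun v => if h ≤ v then h else 0

lemma measurable_qstar (h : ℝ) : Measurable (qstar h) :=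
  Measurable.ite (measurableSet_le measurable_const measurable_id)
    measurable_const measurable_const

def kstar (h : ℝ) : Kernel ℝ ℝ := Kernel.deterministic (qstar h) (measurable_qstar h)

lemma kstar_strategy {h : ℝ} (hh : h ∈ Iu) : IsStrategy (kstar h) := by
  constructor
  · show IsMarkovKernel (Kernel.deterministic (qstar h) (measurable_qstar h))
    infer_instance
  · intro v
    show (Kernel.deterministic (qstar h) (measurable_qstar h)) v Iu = 1
    rw [Kernel.deterministic_apply]
    have hm : qstar h v ∈ Iu := by
      unfold qstar; split_ifs
      exacts [hh, zero_mem_Iu]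
    exact Measure.dirac_apply_of_mem hm

lemma gfun_kstar {F : Measure ℝ} (hF : IsProbOn F) {h : ℝ} (hh : h ∈ Iu) :
    gfun F (kstar h) h = bench F h := by
  haveI := hF.1
  unfold gfun bench
  refine integral_congr_ae ?_
  filter_upwards [ae_mem_Iu hF.2] with v hv
  have hPhi : Phi (kstar h) v h = util (qstar h v) h v := by
    unfold Phi kstar
    rw [Kernel.deterministic_apply]
    exact integral_dirac _ _
  rw [hPhi]
  unfold util qstar
  by_cases hle : h ≤ v
  · simp [hle]
  · have h0 : ¬ h ≤ 0 := fun hc => hle (hc.trans hv.1)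
    simp [hle, h0]

lemma bdd_eUtil_dirac {F : Measure ℝ} (hF : IsProbOn F) (h : ℝ) :
    BddAbove (Set.range fun s' : {k : Kernel ℝ ℝ // IsStrategy k} =>
      eUtil F s'.1 (Measure.dirac h)) := by
  refine ⟨bench F h, ?_⟩
  rintro x ⟨k, rfl⟩
  show eUtil F k.1 (Measure.dirac h) ≤ bench F h
  rw [eUtil_dirac]
  exact gfun_le_bench hF k.2 h

lemma sup_eUtil_dirac {F : Measure ℝ} (hF : IsProbOn F) {h : ℝ} (hh : h ∈ Iu) :
    (⨆ s' : {k : Kernel ℝ ℝ // IsStrategy k}, eUtil F s'.1 (Measure.dirac h))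
      = bench F h := by
  haveI : Nonempty {k : Kernel ℝ ℝ // IsStrategy k} :=
    ⟨⟨kstar 0, kstar_strategy zero_mem_Iu⟩⟩
  apply le_antisymm
  · exact ciSup_le fun k => by rw [eUtil_dirac]; exact gfun_le_bench hF k.2 h
  · have h1 := le_ciSup (bdd_eUtil_dirac hF h)
      (⟨kstar h, kstar_strategy hh⟩ : {k : Kernel ℝ ℝ // IsStrategy k})
    rwa [eUtil_dirac, gfun_kstar hF hh] at h1

lemma regret_dirac {F : Measure ℝ} (hF : IsProbOn F) {s : Kernel ℝ ℝ}
    (hs : IsStrategy s) {h : ℝ} (hh : h ∈ Iu) :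
    regret F s (Measure.dirac h) = bench F h - gfun F s h := by
  unfold regret
  rw [sup_eUtil_dirac hF hh, eUtil_dirac]

lemma bdd_regret_dirac {F : Measure ℝ} (hF : IsProbOn F) {s : Kernel ℝ ℝ}
    (hs : IsStrategy s) :
    BddAbove (Set.range fun h : Iu => regret F s (Measure.dirac (h:ℝ))) := by
  refine ⟨3, ?_⟩
  rintro x ⟨h, rfl⟩
  show regret F s (Measure.dirac (h:ℝ)) ≤ 3
  rw [regret_dirac hF hs h.2]
  have h1 := abs_bench_le hF h.2.1
  have h2 := abs_gfun_le hF hs (h:ℝ)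
  have h3 := abs_le.mp h1
  have h4 := abs_le.mp h2
  linarith [h3.2, h4.1]

lemma regret_le_sup {F : Measure ℝ} (hF : IsProbOn F) {s : Kernel ℝ ℝ}
    (hs : IsStrategy s) {H : Measure ℝ} (hH : IsProbOn H) :
    regret F s H ≤ ⨆ h : Iu, regret F s (Measure.dirac (h:ℝ)) := by
  haveI := hF.1; haveI := hH.1; haveI := hs.1
  haveI : Nonempty {k : Kernel ℝ ℝ // IsStrategy k} :=
    ⟨⟨kstar 0, kstar_strategy zero_mem_Iu⟩⟩
  set M := ⨆ h : Iu, regret F s (Measure.dirac (h:ℝ)) with hM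
  have hA : (⨆ s' : {k : Kernel ℝ ℝ // IsStrategy k}, eUtil F s'.1 H)
      ≤ ∫ h, bench F h ∂H := by
    refine ciSup_le fun k => ?_
    rw [eUtil_eq_int_gfun hF k.2 hH]
    exact integral_mono (integrable_gfun_H hF k.2 hH) (integrable_bench_H hF hH)
      (fun h => gfun_le_bench hF k.2 h)
  have step : regret F s H ≤ ∫ h, (bench F h - gfun F s h) ∂H := by
    unfold regret
    rw [eUtil_eq_int_gfun hF hs hH,
      integral_sub (integrable_bench_H hF hH) (integrable_gfun_H hF hs hH)]
    exact sub_le_sub_right hA _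
  refine step.trans ?_
  have h2 : ∫ h, (bench F h - gfun F s h) ∂H ≤ ∫ _, M ∂H := by
    refine integral_mono_ae
      ((integrable_bench_H hF hH).sub (integrable_gfun_H hF hs hH))
      (integrable_const M) ?_
    filter_upwards [ae_mem_Iu hH.2] with h hh
    rw [← regret_dirac hF hs hh]
    exact le_ciSup (bdd_regret_dirac hF hs) (⟨h, hh⟩ : Iu)
  calc ∫ h, (bench F h - gfun F s h) ∂H ≤ ∫ _, M ∂H := h2
  _ = M := by simp

end Aux

/-- Theorem 1, performance evaluation: for any value distribution `F` on
`[0,1]` and any strategy `s` whose induced bid distribution is absolutely continuous, the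
worst-case regret over all distributions `H` equals the worst case over deterministic highest
competing bids `h ∈ [0,1]`, which equals
`sup_h E_{v∼F}[(v−h)·1{v≥h}] − U_F(s,δ_h)`. -/
theorem worst_case_regret_evaluation
    (F : Measure ℝ) (hF : IsProbOn F) (s : Kernel ℝ ℝ) (hs : IsStrategy s)
    (hac : bidDist F s ≪ volume) :
    (⨆ H : {H : Measure ℝ // IsProbOn H}, regret F s H.1)
        = (⨆ h : Iu, regret F s (Measure.dirac (h : ℝ)))
      ∧ (⨆ h : Iu, regret F s (Measure.dirac (h : ℝ)))
        = ⨆ h : Iu,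
            ((∫ v, (v - (h : ℝ)) * (if (h : ℝ) ≤ v then 1 else 0) ∂F)
              - eUtil F s (Measure.dirac (h : ℝ))) := by
  haveI := hF.1
  haveI : Nonempty Iu := ⟨⟨0, zero_mem_Iu⟩⟩
  haveI hne : Nonempty {H : Measure ℝ // IsProbOn H} :=
    ⟨⟨Measure.dirac 0, ⟨inferInstance, Measure.dirac_apply_of_mem zero_mem_Iu⟩⟩⟩
  constructor
  · apply le_antisymm
    · exact ciSup_le fun H => regret_le_sup hF hs H.2
    · refine ciSup_le fun h => ?_
      have hbdd : BddAbove (Set.range fun H : {H : Measure ℝ // IsProbOn H} =>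
          regret F s H.1) :=
        ⟨⨆ h : Iu, regret F s (Measure.dirac (h:ℝ)), by
          rintro x ⟨H, rfl⟩; exact regret_le_sup hF hs H.2⟩
      exact le_ciSup hbdd
        (⟨Measure.dirac (h:ℝ), ⟨inferInstance, Measure.dirac_apply_of_mem h.2⟩⟩ :
          {H : Measure ℝ // IsProbOn H})
  · refine iSup_congr fun h => ?_
    rw [regret_dirac hF hs h.2, eUtil_dirac]
    rfl

end FPA
end
end

section
/- Let F be a probability measure on [0,1] with F({0}) = 0, and let Q* : [0,1] → [0,1] be an absolutely continuous strictly increasing function with Q*(0) = 0, 0 < Q*(y) < F⁻(y) for all y in (0,1], and (Q*)'(y) = (F⁻(y) − Q*(y)) / (1 − F(Q*(y))) for almost every y. Then for all y in [0,1]: ∫_{Q*(y)}^1 (1 − F(t)) dt − ∫_y^1 (F⁻(t) − Q*(t)) dt = ∫_0^1 Q*(t) dt. -/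
open MeasureTheory ProbabilityTheory Set

noncomputable section

namespace FPA

open Filter Metric intervalIntegral
open scoped ENNReal Topology Interval

/-- Lebesgue differentiation: a.e. derivative of the primitive of an integrable function. -/
theorem ae_hasDerivAt_primitive {f : ℝ → ℝ} (hf : Integrable f) :
    ∀ᵐ x, HasDerivAt (fun y => ∫ t in (0:ℝ)..y, f t) (f x) x := by
  filter_upwards [IsUnifLocDoublingMeasure.ae_tendsto_average_norm_sub (μ := (volume : Measure ℝ))
    hf.locallyIntegrable 1] with x hx
  have havg : Tendsto (fun x' : ℝ => ⨍ y in closedBall x |x' - x|, ‖f y - f x‖)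
      (nhdsWithin x {x}ᶜ) (nhds 0) := by
    apply hx (fun _ => x) (fun x' => |x' - x|)
    · rw [tendsto_nhdsWithin_iff]
      constructor
      · have : Tendsto (fun x' : ℝ => x' - x) (nhdsWithin x {x}ᶜ) (nhds 0) := by
          apply Tendsto.mono_left _ nhdsWithin_le_nhds
          have h0 := ((continuous_id (X := ℝ)).sub (continuous_const (y := x))).tendsto x
          simpa [Pi.sub_def] using h0
        simpa using this.abs
      · filter_upwards [self_mem_nhdsWithin] with y hy
        simpa [abs_pos, sub_eq_zero] using hy
    · filter_upwards with y
      simp [abs_nonneg]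
  rw [hasDerivAt_iff_tendsto]
  have key : ∀ x' : ℝ, x' ≠ x →
      ‖x' - x‖⁻¹ * ‖(∫ t in (0:ℝ)..x', f t) - (∫ t in (0:ℝ)..x, f t) - (x' - x) • f x‖
        ≤ 2 * ⨍ y in closedBall x |x' - x|, ‖f y - f x‖ := by
    intro x' hx'
    have hr : 0 < |x' - x| := by simpa [abs_pos, sub_eq_zero] using hx'
    have hint : IntervalIntegrable f volume x x' := hf.intervalIntegrable
    have h1 : (∫ t in (0:ℝ)..x', f t) - (∫ t in (0:ℝ)..x, f t) = ∫ t in x..x', f t := by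
      rw [← intervalIntegral.integral_add_adjacent_intervals (a := (0:ℝ)) (b := x) (c := x')
        hf.intervalIntegrable hint]
      ring
    have h2 : (x' - x) • f x = ∫ t in x..x', f x := by
      simp [intervalIntegral.integral_const]
    rw [h1, h2, ← intervalIntegral.integral_sub hint (intervalIntegrable_const)]
    have h3 : ‖∫ t in x..x', (f t - f x)‖ ≤ ∫ t in Ι x x', ‖f t - f x‖ :=
      intervalIntegral.norm_integral_le_integral_norm_uIoc
    have hsub : Ι x x' ⊆ closedBall x |x' - x| := by
      intro t ht
      rcases le_or_gt x x' with h | h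
      · rw [Set.uIoc_of_le h] at ht
        rw [mem_closedBall, Real.dist_eq, abs_sub_le_iff]
        constructor <;> [skip; skip] <;>
          · rw [abs_of_nonneg (by linarith [ht.1, ht.2] : (0:ℝ) ≤ x' - x)] <;> linarith [ht.1, ht.2]
      · rw [Set.uIoc_of_ge h.le] at ht
        rw [mem_closedBall, Real.dist_eq, abs_sub_le_iff]
        have : |x' - x| = x - x' := by rw [abs_of_nonpos (by linarith)]; ring
        rw [this]
        constructor <;> linarith [ht.1, ht.2]
    have hintcb : IntegrableOn (fun t => ‖f t - f x‖) (closedBall x |x' - x|) volume := by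
      apply Integrable.norm
      exact hf.integrableOn.sub (integrableOn_const measure_closedBall_lt_top.ne)
    have h4 : (∫ t in Ι x x', ‖f t - f x‖) ≤ ∫ t in closedBall x |x' - x|, ‖f t - f x‖ := by
      apply setIntegral_mono_set hintcb
      · filter_upwards with t using norm_nonneg _
      · exact HasSubset.Subset.eventuallyLE hsub
    have h5 : (∫ t in closedBall x |x' - x|, ‖f t - f x‖)
        = (2 * |x' - x|) * ⨍ y in closedBall x |x' - x|, ‖f y - f x‖ := by
      rw [setAverage_eq, Real.volume_real_closedBall hr.le, smul_eq_mul, ← mul_assoc]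
      rw [mul_inv_cancel₀ (by positivity), one_mul]
    have havgnn : 0 ≤ ⨍ y in closedBall x |x' - x|, ‖f y - f x‖ := by
      rw [setAverage_eq]
      exact smul_nonneg (by positivity) (setIntegral_nonneg measurableSet_closedBall
        (fun t _ => norm_nonneg _))
    calc ‖x' - x‖⁻¹ * ‖∫ t in x..x', (f t - f x)‖
        ≤ ‖x' - x‖⁻¹ * ((2 * |x' - x|) * ⨍ y in closedBall x |x' - x|, ‖f y - f x‖) := by
          apply mul_le_mul_of_nonneg_left _ (by positivity)
          rw [← h5]; exact h3.trans h4
      _ = 2 * ⨍ y in closedBall x |x' - x|, ‖f y - f x‖ := by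
          rw [Real.norm_eq_abs]
          field_simp
  have h2avg : Tendsto (fun x' : ℝ => 2 * ⨍ y in closedBall x |x' - x|, ‖f y - f x‖)
      (nhdsWithin x {x}ᶜ) (nhds 0) := by
    simpa using havg.const_mul 2
  have htends : Tendsto (fun x' : ℝ =>
      ‖x' - x‖⁻¹ * ‖(∫ t in (0:ℝ)..x', f t) - (∫ t in (0:ℝ)..x, f t) - (x' - x) • f x‖)
      (nhdsWithin x {x}ᶜ) (nhds 0) := by
    apply squeeze_zero' _ _ h2avg
    · filter_upwards with x' using by positivity
    · filter_upwards [self_mem_nhdsWithin] with x' hx' using key x' hx'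
  have : nhds x = nhdsWithin x {x}ᶜ ⊔ pure x := (nhdsNE_sup_pure x).symm
  rw [this]
  rw [tendsto_sup]
  refine ⟨htends, ?_⟩
  have hval : ‖x - x‖⁻¹ *
      ‖(∫ t in (0:ℝ)..x, f t) - (∫ t in (0:ℝ)..x, f t) - (x - x) • f x‖ = 0 := by simp
  rw [tendsto_pure_left]
  intro s hs
  rw [hval] at *
  exact mem_of_mem_nhds hs

variable {F : Measure ℝ}


lemma cdf01_eq (hP : IsProbabilityMeasure F) (x : ℝ) : cdf01 F x = ProbabilityTheory.cdf F x :=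
  (cdf_eq_real F x).symm

lemma cdf01_mono (hP : IsProbabilityMeasure F) : Monotone (cdf01 F) := by
  intro a b hab
  rw [cdf01_eq hP, cdf01_eq hP]
  exact monotone_cdf F hab

lemma cdf01_nonneg (x : ℝ) : 0 ≤ cdf01 F x := ENNReal.toReal_nonneg

lemma cdf01_le_one (hP : IsProbabilityMeasure F) (x : ℝ) : cdf01 F x ≤ 1 := by
  rw [cdf01_eq hP]; exact cdf_le_one F x

lemma compl_Iu_null (hF : IsProbOn F) : F Iuᶜ = 0 := by
  have hP := hF.1
  have : F Iuᶜ = F univ - F Iu :=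
    measure_compl (by exact measurableSet_Icc) (measure_ne_top _ _)
  rw [this, hF.2]
  simp

lemma cdf01_one (hF : IsProbOn F) : cdf01 F 1 = 1 := by
  have hP := hF.1
  have h1 : F (Set.Iic 1) ≤ 1 := le_trans (measure_mono (subset_univ _)) (by simp)
  have h2 : (1:ℝ≥0∞) ≤ F (Set.Iic 1) := by
    rw [← hF.2]; exact measure_mono (fun x hx => hx.2)
  have h3 : F (Set.Iic 1) = 1 := le_antisymm h1 h2
  simp [cdf01, h3]

lemma cdf01_of_ge_one (hF : IsProbOn F) {x : ℝ} (hx : 1 ≤ x) : cdf01 F x = 1 :=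
  le_antisymm (cdf01_le_one hF.1 x) (by rw [← cdf01_one hF]; exact cdf01_mono hF.1 hx)

lemma cdf01_nonpos (hF : IsProbOn F) (hF0 : F {0} = 0) {x : ℝ} (hx : x ≤ 0) : cdf01 F x = 0 := by
  have h : F (Set.Iic x) ≤ F ({0} : Set ℝ) + F Iuᶜ := by
    refine le_trans (measure_mono ?_) (measure_union_le _ _)
    intro y hy
    rcases eq_or_lt_of_le (le_trans hy hx) with h | h
    · exact Or.inl h
    · exact Or.inr (fun hc => absurd hc.1 (not_le.mpr h))
  rw [hF0, compl_Iu_null hF] at h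
  simp only [add_zero, nonpos_iff_eq_zero] at h
  simp [cdf01, h]

/-- Right-continuity consequence. -/
lemma le_cdf01_of_forall (hP : IsProbabilityMeasure F) {c t : ℝ}
    (h : ∀ x > c, t ≤ cdf01 F x) : t ≤ cdf01 F c := by
  rw [cdf01_eq hP]
  have hrc : ContinuousWithinAt (ProbabilityTheory.cdf F) (Ici c) c :=
    (ProbabilityTheory.cdf F).right_continuous' c
  have htt : Tendsto (ProbabilityTheory.cdf F) (𝓝[>] c) (𝓝 (ProbabilityTheory.cdf F c)) :=
    hrc.tendsto.mono_left (nhdsWithin_mono c Ioi_subset_Ici_self)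
  refine ge_of_tendsto htt ?_
  filter_upwards [self_mem_nhdsWithin] with x hx
  rw [← cdf01_eq hP]
  exact h x hx

lemma qinv_set_nonempty (hF : IsProbOn F) {t : ℝ} (ht : t ≤ 1) :
    {x | x ∈ Iu ∧ t ≤ cdf01 F x}.Nonempty :=
  ⟨1, ⟨by simp [Iu], by rw [cdf01_one hF]; exact ht⟩⟩

lemma qinv_set_bddBelow : BddBelow {x | x ∈ Iu ∧ t ≤ cdf01 F x} :=
  ⟨0, fun x hx => hx.1.1⟩

lemma qinv_le_one (hF : IsProbOn F) {t : ℝ} (ht : t ≤ 1) : qinv F t ≤ 1 :=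
  csInf_le qinv_set_bddBelow ⟨by simp [Iu], by rw [cdf01_one hF]; exact ht⟩

lemma qinv_nonneg {t : ℝ} : 0 ≤ qinv F t :=
  Real.sInf_nonneg (fun x hx => hx.1.1)

/-- Galois connection between qinv and cdf. -/
lemma qinv_le_iff (hF : IsProbOn F) {t : ℝ} (ht : t ∈ Ioc (0:ℝ) 1) {s : ℝ} (hs : 0 < s) :
    qinv F t ≤ s ↔ t ≤ cdf01 F s := by
  constructor
  · intro h
    apply le_cdf01_of_forall hF.1
    intro x hx
    -- there is y in the set with y < x (since sInf ≤ s < x), so cdf x ≥ cdf y ≥ t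
    obtain ⟨y, hy, hyx⟩ := (csInf_lt_iff qinv_set_bddBelow (qinv_set_nonempty hF ht.2)).mp
      (lt_of_le_of_lt h hx)
    exact le_trans hy.2 (cdf01_mono hF.1 hyx.le)
  · intro h
    rcases le_or_gt s 1 with hs1 | hs1
    · exact csInf_le qinv_set_bddBelow ⟨⟨hs.le, hs1⟩, h⟩
    · exact le_trans (qinv_le_one hF ht.2) hs1.le


/-- Monotone modification of qinv agreeing on `Iic 1`. -/
def qt (F : Measure ℝ) (t : ℝ) : ℝ := qinv F (min t 1)

lemma qt_mono (hF : IsProbOn F) : Monotone (qt F) := by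
  intro a b hab
  apply csInf_le_csInf qinv_set_bddBelow (qinv_set_nonempty hF (min_le_right b 1))
  intro x hx
  exact ⟨hx.1, le_trans (min_le_min hab le_rfl) hx.2⟩

lemma qt_measurable (hF : IsProbOn F) : Measurable (qt F) := (qt_mono hF).measurable

lemma cdf01_measurable (hP : IsProbabilityMeasure F) : Measurable (cdf01 F) :=
  (cdf01_mono hP).measurable

/-- The quantile identity. -/
lemma quantile_identity (hF : IsProbOn F) (hF0 : F {0} = 0) :
    (∫ t in (0:ℝ)..1, qinv F t) = ∫ t in (0:ℝ)..1, (1 - cdf01 F t) := by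
  rw [intervalIntegral.integral_of_le zero_le_one, intervalIntegral.integral_of_le zero_le_one]
  have hqt_eq : EqOn (qinv F) (qt F) (Ioc (0:ℝ) 1) := by
    intro t ht
    simp [qt, min_eq_left ht.2]
  rw [setIntegral_congr_fun measurableSet_Ioc hqt_eq]
  have hqt_nn : ∀ t, 0 ≤ qt F t := fun t => qinv_nonneg
  have hcdf_nn : ∀ t, (0:ℝ) ≤ 1 - cdf01 F t := fun t => by
    linarith [cdf01_le_one hF.1 t]
  rw [integral_eq_lintegral_of_nonneg_ae (ae_of_all _ hqt_nn)
    ((qt_measurable hF).aestronglyMeasurable),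
    integral_eq_lintegral_of_nonneg_ae (ae_of_all _ hcdf_nn)
    ((measurable_const.sub (cdf01_measurable hF.1)).aestronglyMeasurable)]
  congr 1
  rw [lintegral_eq_lintegral_meas_lt _ (ae_of_all _ hqt_nn)
    (qt_measurable hF).aemeasurable]
  have hmeas : ∀ s : ℝ, MeasurableSet {a : ℝ | s < qt F a} :=
    fun s => measurableSet_lt measurable_const (qt_measurable hF)
  have key : ∀ s ∈ Ioi (0:ℝ),
      (volume.restrict (Ioc (0:ℝ) 1)) {a | s < qt F a} = ENNReal.ofReal (1 - cdf01 F s) := by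
    intro s hs
    rw [Measure.restrict_apply (hmeas s)]
    have hset : {a : ℝ | s < qt F a} ∩ Ioc 0 1 = Ioc (cdf01 F s) 1 := by
      ext a
      simp only [mem_inter_iff, mem_setOf_eq, mem_Ioc]
      constructor
      · rintro ⟨hlt, ha⟩
        refine ⟨?_, ha.2⟩
        by_contra hc
        push_neg at hc
        have : qinv F a ≤ s := (qinv_le_iff hF ⟨ha.1, ha.2⟩ hs).mpr hc
        rw [← hqt_eq ⟨ha.1, ha.2⟩] at hlt
        exact absurd this (not_le.mpr hlt)
      · rintro ⟨hgt, ha1⟩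
        have ha0 : 0 < a := lt_of_le_of_lt (cdf01_nonneg s) hgt
        refine ⟨?_, ha0, ha1⟩
        rw [← hqt_eq ⟨ha0, ha1⟩]
        by_contra hc
        push_neg at hc
        have := (qinv_le_iff hF ⟨ha0, ha1⟩ hs).mp hc
        exact absurd hgt (not_lt.mpr this)
    rw [hset, Real.volume_Ioc]
  rw [setLIntegral_congr_fun measurableSet_Ioi key]
  have hsplit : Ioi (0:ℝ) = Ioc (0:ℝ) 1 ∪ Ioi 1 := (Ioc_union_Ioi_eq_Ioi zero_le_one).symm
  rw [hsplit, lintegral_union measurableSet_Ioi (Ioc_disjoint_Ioi le_rfl)]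
  have hzero : ∫⁻ s in Ioi (1:ℝ), ENNReal.ofReal (1 - cdf01 F s) = 0 := by
    have hae : ∀ᵐ s ∂(volume.restrict (Ioi (1:ℝ))), ENNReal.ofReal (1 - cdf01 F s) = 0 := by
      rw [ae_restrict_iff' measurableSet_Ioi]
      filter_upwards with s hs
      simp [cdf01_of_ge_one hF (le_of_lt hs)]
    rw [lintegral_congr_ae hae, lintegral_zero]
  rw [hzero, add_zero]


/-- The key change-of-variables identity. -/
theorem key_cov (F : Measure ℝ) (hF : IsProbOn F)
    (Q : ℝ → ℝ) (hQac : AbsContOn01 Q) (hQmono : StrictMonoOn Q Iu)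
    (hQmaps : MapsTo Q Iu Iu) (hQ0 : Q 0 = 0)
    (hQbd : ∀ y ∈ Set.Ioc (0:ℝ) 1, 0 < Q y ∧ Q y < qinv F y)
    (hode : ∀ᵐ y ∂(volume.restrict Iu),
      HasDerivAt Q ((qinv F y - Q y) / (1 - cdf01 F (Q y))) y) :
    ∀ y ∈ Iu, (∫ u in (0:ℝ)..(Q y), (1 - cdf01 F u))
      = ∫ t in (0:ℝ)..y, (qinv F t - Q t) := by
  have hP : IsProbabilityMeasure F := hF.1
  obtain ⟨g, hgInt, hgRepr⟩ := hQac
  -- the globalized density and primitive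
  set gbar : ℝ → ℝ := (Set.Icc (0:ℝ) 1).indicator g with hgbar_def
  have hgbarInt : Integrable gbar := by
    apply IntegrableOn.integrable_indicator _ measurableSet_Icc
    rw [integrableOn_Icc_iff_integrableOn_Ioc]
    simpa [intervalIntegrable_iff, uIoc_of_le (zero_le_one' ℝ)] using hgInt
  set Qc : ℝ → ℝ := fun x => Q 0 + ∫ t in (0:ℝ)..x, gbar t with hQc_def
  have hQcII : ∀ a b : ℝ, IntervalIntegrable gbar volume a b :=
    fun a b => hgbarInt.intervalIntegrable
  have hQc_cont : Continuous Qc :=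
    continuous_const.add (intervalIntegral.continuous_primitive hQcII 0)
  -- Qc = Q on Iu
  have hQc_eq : ∀ x ∈ Iu, Qc x = Q x := by
    intro x hx
    have : ∫ t in (0:ℝ)..x, gbar t = ∫ t in (0:ℝ)..x, g t := by
      apply intervalIntegral.integral_congr
      intro t ht
      rw [uIcc_of_le hx.1] at ht
      exact indicator_of_mem (show t ∈ Set.Icc (0:ℝ) 1 from ⟨ht.1, le_trans ht.2 hx.2⟩) g
    rw [hQc_def]
    simp only [this]
    exact (hgRepr x hx).symm
  -- clamp identity
  have hQc_clamp : ∀ x : ℝ, Qc x = Q (min (max x 0) 1) := by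
    intro x
    rcases le_or_gt x 0 with hx0 | hx0
    · have h1 : ∫ t in (0:ℝ)..x, gbar t = 0 := by
        rw [intervalIntegral.integral_symm, intervalIntegral.integral_of_le hx0]
        have hne0 : ∀ᵐ t : ℝ ∂volume, t ≠ 0 := by
          have h0 : volume ({0} : Set ℝ) = 0 := measure_singleton 0
          rw [ae_iff]
          convert h0 using 2
          ext t
          simp [not_not]
        have hae : ∀ᵐ t ∂(volume.restrict (Ioc x 0)), gbar t = 0 := by
          filter_upwards [ae_restrict_mem measurableSet_Ioc, ae_restrict_of_ae hne0]
            with t ht hne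
          have : t < 0 := lt_of_le_of_ne ht.2 hne
          exact indicator_of_notMem (fun hc => absurd hc.1 (not_le.mpr this)) g
        rw [integral_congr_ae hae]
        simp
      have h2 : min (max x 0) 1 = 0 := by
        rw [max_eq_right hx0, min_eq_left zero_le_one]
      rw [hQc_def]
      simp only [h1, h2, add_zero]
    rcases le_or_gt x 1 with hx1 | hx1
    · have : min (max x 0) 1 = x := by
        rw [max_eq_left hx0.le, min_eq_left hx1]
      rw [this]
      exact hQc_eq x ⟨hx0.le, hx1⟩
    · have h2 : min (max x 0) 1 = 1 := by
        rw [max_eq_left (zero_le_one.trans hx1.le)]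
        exact min_eq_right hx1.le
      have h3 : ∫ t in (0:ℝ)..x, gbar t = ∫ t in (0:ℝ)..1, gbar t := by
        rw [← intervalIntegral.integral_add_adjacent_intervals (a := (0:ℝ)) (b := 1) (c := x)
          (hQcII 0 1) (hQcII 1 x)]
        have hzz : ∫ t in (1:ℝ)..x, gbar t = 0 := by
          rw [intervalIntegral.integral_of_le hx1.le]
          rw [setIntegral_congr_fun measurableSet_Ioc
            (fun t (ht : t ∈ Ioc (1:ℝ) x) =>
              indicator_of_notMem (fun hc => absurd hc.2 (not_le.mpr ht.1)) g)]
          simp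
        rw [hzz, add_zero]
      rw [hQc_def, h2]
      simp only [h3]
      exact hQc_eq 1 ⟨zero_le_one, le_refl 1⟩
  -- clamp membership and monotonicity of Qc
  have hclamp_mem : ∀ x : ℝ, min (max x 0) 1 ∈ Iu := fun x =>
    ⟨le_min (le_max_right x 0) zero_le_one, min_le_right _ 1⟩
  have hQc_mono : Monotone Qc := by
    intro a b hab
    rw [hQc_clamp a, hQc_clamp b]
    exact hQmono.monotoneOn (hclamp_mem a) (hclamp_mem b)
      (min_le_min (max_le_max hab le_rfl) le_rfl)
  -- a.e. derivative of Qc is gbar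
  have hQc_deriv : ∀ᵐ x, HasDerivAt Qc (gbar x) x := by
    filter_upwards [ae_hasDerivAt_primitive hgbarInt] with x hx
    simpa [hQc_def] using hx.const_add (Q 0)
  -- gbar is a.e. nonnegative
  have hgbar_nn : ∀ᵐ x, 0 ≤ gbar x := by
    filter_upwards [hQc_deriv] with x hx
    have hslope := hasDerivAt_iff_tendsto_slope.mp hx
    have h2 : Tendsto (slope Qc x) (𝓝[>] x) (𝓝 (gbar x)) :=
      hslope.mono_left (nhdsWithin_mono x (fun y hy => ne_of_gt hy))
    refine ge_of_tendsto h2 ?_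
    filter_upwards [self_mem_nhdsWithin] with y hy
    have hpos : (0:ℝ) < y - x := sub_pos.mpr hy
    rw [slope_def_field]
    exact div_nonneg (sub_nonneg.mpr (hQc_mono (le_of_lt hy))) hpos.le
  -- Stieltjes function of Qc
  set σQ : StieltjesFunction ℝ :=
    ⟨Qc, hQc_mono, fun x => hQc_cont.continuousAt.continuousWithinAt⟩ with hσQ_def
  have hν_eq : σQ.measure = volume.withDensity (fun t => ENNReal.ofReal (gbar t)) := by
    refine Measure.ext_of_Ioc _ _ (fun a b hab => ?_)
    rw [σQ.measure_Ioc, withDensity_apply _ measurableSet_Ioc,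
      ← ofReal_integral_eq_lintegral_ofReal hgbarInt.integrableOn
        (ae_restrict_of_ae hgbar_nn)]
    congr 1
    rw [← intervalIntegral.integral_of_le hab.le]
    show Qc b - Qc a = _
    rw [hQc_def]
    simp only [add_sub_add_left_eq_sub]
    exact intervalIntegral.integral_interval_sub_left (hQcII 0 b) (hQcII 0 a)
  -- the primitive of 1 - cdf
  have hcdfII : ∀ a b : ℝ, IntervalIntegrable (fun u => 1 - cdf01 F u) volume a b := by
    intro a b
    have : Antitone (fun u => 1 - cdf01 F u) :=
      fun u v huv => by simp only []; linarith [cdf01_mono hP huv]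
    exact this.intervalIntegrable
  set Ψ : ℝ → ℝ := (fun x => ∫ u in (0:ℝ)..x, (1 - cdf01 F u)) with hΨ_def
  have hΨ_cont : Continuous Ψ := intervalIntegral.continuous_primitive hcdfII 0
  have hΨ_sub : ∀ a b : ℝ, Ψ b - Ψ a = ∫ u in a..b, (1 - cdf01 F u) :=
    fun a b => intervalIntegral.integral_interval_sub_left (hcdfII 0 b) (hcdfII 0 a)
  have hΨ_mono : Monotone Ψ := by
    intro a b hab
    have h : 0 ≤ Ψ b - Ψ a := by
      rw [hΨ_sub]
      apply intervalIntegral.integral_nonneg hab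
      intro u _
      linarith [cdf01_le_one hP u]
    linarith
  set Φ : ℝ → ℝ := fun y => Ψ (Qc y) with hΦ_def
  have hΦ_mono : Monotone Φ := fun a b hab => hΨ_mono (hQc_mono hab)
  have hΦ_cont : Continuous Φ := hΨ_cont.comp hQc_cont
  set σΦ : StieltjesFunction ℝ :=
    ⟨Φ, hΦ_mono, fun x => hΦ_cont.continuousAt.continuousWithinAt⟩ with hσΦ_def
  set R : ℝ → ℝ := fun x => Qc x - Φ x with hR_def
  have hR_mono : Monotone R := by
    intro a b hab
    have h1 : Φ b - Φ a = ∫ u in (Qc a)..(Qc b), (1 - cdf01 F u) := hΨ_sub _ _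
    have h2 : Qc b - Qc a = ∫ u in (Qc a)..(Qc b), (1:ℝ) := by
      rw [intervalIntegral.integral_const, smul_eq_mul, mul_one]
    have h3 : Φ b - Φ a ≤ Qc b - Qc a := by
      rw [h1, h2]
      apply intervalIntegral.integral_mono_on (hQc_mono hab) (hcdfII _ _)
        intervalIntegrable_const
      intro u _
      linarith [cdf01_nonneg (F := F) u]
    simp only [hR_def]
    linarith
  set σR : StieltjesFunction ℝ :=
    ⟨R, hR_mono, fun x => ((hQc_cont.sub hΦ_cont).continuousAt).continuousWithinAt⟩ with hσR_def
  have hsum : σQ.measure = σΦ.measure + σR.measure := by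
    refine Measure.ext_of_Ioc _ _ (fun a b hab => ?_)
    rw [Measure.add_apply, σQ.measure_Ioc, σΦ.measure_Ioc, σR.measure_Ioc,
      ← ENNReal.ofReal_add (sub_nonneg.mpr (hΦ_mono hab.le)) (sub_nonneg.mpr (hR_mono hab.le))]
    congr 1
    show Qc b - Qc a = (Φ b - Φ a) + (R b - R a)
    simp only [hR_def]
    ring
  have hΦAC : σΦ.measure ≪ volume := by
    have hle : σΦ.measure ≤ σQ.measure := by
      rw [hsum]
      exact Measure.le_add_right (le_refl _)
    refine (Measure.absolutelyContinuous_of_le hle).trans ?_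
    rw [hν_eq]
    exact withDensity_absolutelyContinuous volume _
  set φ : ℝ → ℝ≥0∞ := σΦ.measure.rnDeriv volume with hφ_def
  have hΦ_repr : ∀ y : ℝ, 0 ≤ y → Φ y - Φ 0 = ∫ t in Ioc (0:ℝ) y, (φ t).toReal := by
    intro y hy
    have h1 : σΦ.measure (Ioc 0 y) = ENNReal.ofReal (Φ y - Φ 0) := σΦ.measure_Ioc 0 y
    have h2 : volume.withDensity φ = σΦ.measure := Measure.withDensity_rnDeriv_eq _ _ hΦAC
    have h3 : ∫ t in Ioc (0:ℝ) y, (φ t).toReal = (∫⁻ t in Ioc (0:ℝ) y, φ t).toReal :=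
      integral_toReal (Measure.measurable_rnDeriv _ _).aemeasurable
        (ae_restrict_of_ae (Measure.rnDeriv_lt_top _ _))
    rw [h3, ← withDensity_apply _ measurableSet_Ioc, h2, h1,
      ENNReal.toReal_ofReal (sub_nonneg.mpr (hΦ_mono hy))]
  -- bad set of discontinuity points
  have hcdf_meas := cdf01_measurable hP
  have hDcount : Set.Countable {x : ℝ | ¬ ContinuousAt (cdf01 F) x} :=
    (cdf01_mono hP).countable_not_continuousAt
  have hBadcount : Set.Countable
      {t : ℝ | t ∈ Ioo (0:ℝ) 1 ∧ ¬ ContinuousAt (cdf01 F) (Qc t)} := by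
    have hsub : {t : ℝ | t ∈ Ioo (0:ℝ) 1 ∧ ¬ ContinuousAt (cdf01 F) (Qc t)} ⊆
        ⋃ d ∈ {x : ℝ | ¬ ContinuousAt (cdf01 F) x}, {t | t ∈ Ioo (0:ℝ) 1 ∧ Qc t = d} := by
      intro t ht
      exact mem_biUnion ht.2 ⟨ht.1, rfl⟩
    refine Set.Countable.mono hsub (hDcount.biUnion (fun d _ => ?_))
    apply Set.Subsingleton.countable
    intro a ha b hb
    have hIa : a ∈ Iu := ⟨ha.1.1.le, ha.1.2.le⟩
    have hIb : b ∈ Iu := ⟨hb.1.1.le, hb.1.2.le⟩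
    apply hQmono.injOn hIa hIb
    rw [← hQc_eq a hIa, ← hQc_eq b hIb, ha.2, hb.2]
  have hBadnull : ∀ᵐ t : ℝ, ¬ (t ∈ Ioo (0:ℝ) 1 ∧ ¬ ContinuousAt (cdf01 F) (Qc t)) := by
    rw [ae_iff]
    have := hBadcount.measure_zero (volume : Measure ℝ)
    convert this using 2
    ext t
    simp only [mem_setOf_eq, not_not]
  have hne1 : ∀ᵐ t : ℝ, t ≠ (1:ℝ) := by
    rw [ae_iff]
    have h0 : volume ({(1:ℝ)} : Set ℝ) = 0 := measure_singleton 1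
    convert h0 using 2
    ext t
    simp [not_not]
  have hodeIu : ∀ᵐ t : ℝ, t ∈ Iu → HasDerivAt Q ((qinv F t - Q t) / (1 - cdf01 F (Q t))) t := by
    have : MeasurableSet Iu := measurableSet_Icc
    exact (ae_restrict_iff' this).mp hode
  -- a.e. identification of the density
  have hmain : ∀ᵐ t : ℝ, t ∈ Ioo (0:ℝ) 1 → (φ t).toReal = qinv F t - Qc t := by
    filter_upwards [σΦ.ae_hasDerivAt, hodeIu, hBadnull] with t hΦd hQd hBad ht
    have hIu : t ∈ Iu := ⟨ht.1.le, ht.2.le⟩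
    have hcont : ContinuousAt (cdf01 F) (Qc t) := by
      by_contra hc
      exact hBad ⟨ht, hc⟩
    have hQeq : Q =ᶠ[𝓝 t] Qc := by
      filter_upwards [Ioo_mem_nhds ht.1 ht.2] with u hu
      exact (hQc_eq u ⟨hu.1.le, hu.2.le⟩).symm
    have hQcd : HasDerivAt Qc ((qinv F t - Q t) / (1 - cdf01 F (Q t))) t :=
      (hQd hIu).congr_of_eventuallyEq hQeq.symm
    have hΨd : HasDerivAt Ψ (1 - cdf01 F (Qc t)) (Qc t) := by
      apply intervalIntegral.integral_hasDerivAt_right (hcdfII 0 (Qc t))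
        ((measurable_const.sub hcdf_meas).stronglyMeasurable.stronglyMeasurableAtFilter)
        (continuousAt_const.sub hcont)
    have hcomp : HasDerivAt Φ
        ((1 - cdf01 F (Qc t)) * ((qinv F t - Q t) / (1 - cdf01 F (Q t)))) t :=
      HasDerivAt.comp t hΨd hQcd
    have hQt : Qc t = Q t := hQc_eq t hIu
    have hlt : cdf01 F (Q t) < 1 := by
      have h1 : Q t < qinv F t := (hQbd t ⟨ht.1, ht.2.le⟩).2
      have h2 : cdf01 F (Q t) < t := by
        by_contra hc
        push_neg at hc
        have : qinv F t ≤ Q t := csInf_le qinv_set_bddBelow ⟨hQmaps hIu, hc⟩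
        linarith
      linarith [ht.2]
    have hne : (1 - cdf01 F (Q t)) ≠ 0 := ne_of_gt (by linarith)
    have hddd : (1 - cdf01 F (Qc t)) * ((qinv F t - Q t) / (1 - cdf01 F (Q t)))
        = qinv F t - Qc t := by
      rw [hQt, mul_comm, div_mul_cancel₀ _ hne]
    rw [← hddd]
    exact HasDerivAt.unique hΦd hcomp
  -- conclusion
  intro y hy
  have h0 : Φ 0 = 0 := by
    show Ψ (Qc 0) = 0
    rw [hQc_eq 0 ⟨le_refl (0:ℝ), zero_le_one⟩, hQ0]
    simp [hΨ_def]
  have hleft : (∫ u in (0:ℝ)..(Q y), (1 - cdf01 F u)) = Φ y - Φ 0 := by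
    rw [h0, sub_zero]
    show _ = Ψ (Qc y)
    rw [hQc_eq y hy]
  have hright : ∫ t in Ioc (0:ℝ) y, (φ t).toReal
      = ∫ t in Ioc (0:ℝ) y, (qinv F t - Qc t) := by
    refine integral_congr_ae ((ae_restrict_iff' measurableSet_Ioc).mpr ?_)
    filter_upwards [hmain, hne1] with t hm h1 ht
    exact hm ⟨ht.1, lt_of_le_of_ne (ht.2.trans hy.2) h1⟩
  rw [hleft, hΦ_repr y hy.1, hright, ← intervalIntegral.integral_of_le hy.1]
  apply intervalIntegral.integral_congr
  intro t ht
  rw [uIcc_of_le hy.1] at ht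
  show qinv F t - Qc t = qinv F t - Q t
  rw [hQc_eq t ⟨ht.1, ht.2.trans hy.2⟩]



/-- Lemma: all competing bids `Q*(y)` yield the same regret: if `Q*` is
absolutely continuous, strictly increasing, with `Q*(0) = 0`, `0 < Q*(y) < F⁻(y)` on `(0,1]`,
and solves `(Q*)'(y) = (F⁻(y) − Q*(y))/(1 − F(Q*(y)))` a.e., then for all `y ∈ [0,1]`,
`∫_{Q*(y)}^1 (1 − F(t)) dt − ∫_y^1 (F⁻(t) − Q*(t)) dt = ∫_0^1 Q*(t) dt`. -/
theorem regret_constant_along_quantiles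
    (F : Measure ℝ) (hF : IsProbOn F) (hF0 : F {0} = 0)
    (Q : ℝ → ℝ) (hQac : AbsContOn01 Q) (hQmono : StrictMonoOn Q Iu)
    (hQmaps : MapsTo Q Iu Iu) (hQ0 : Q 0 = 0)
    (hQbd : ∀ y ∈ Set.Ioc (0:ℝ) 1, 0 < Q y ∧ Q y < qinv F y)
    (hode : ∀ᵐ y ∂(volume.restrict Iu),
      HasDerivAt Q ((qinv F y - Q y) / (1 - cdf01 F (Q y))) y) :
    ∀ y ∈ Iu,
      (∫ t in (Q y)..(1:ℝ), (1 - cdf01 F t)) - (∫ t in y..(1:ℝ), (qinv F t - Q t))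
        = ∫ t in (0:ℝ)..1, Q t := by
  intro y hy
  have hP : IsProbabilityMeasure F := hF.1
  have hcdfII : ∀ a b : ℝ, IntervalIntegrable (fun u => 1 - cdf01 F u) volume a b := by
    intro a b
    have : Antitone (fun u => 1 - cdf01 F u) :=
      fun u v huv => by simp only []; linarith [cdf01_mono hP huv]
    exact this.intervalIntegrable
  have hqtII : ∀ a b : ℝ, IntervalIntegrable (qt F) volume a b :=
    fun a b => (qt_mono hF).intervalIntegrable
  have hQII : ∀ a b : ℝ, a ∈ Iu → b ∈ Iu → IntervalIntegrable Q volume a b := by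
    intro a b ha hb
    have hsub : uIcc a b ⊆ Iu := by
      rw [uIcc]
      exact Icc_subset_Icc (le_min ha.1 hb.1) (max_le ha.2 hb.2)
    exact (hQmono.monotoneOn.mono hsub).intervalIntegrable
  have h0Iu : (0:ℝ) ∈ Iu := ⟨le_refl 0, zero_le_one⟩
  have h1Iu : (1:ℝ) ∈ Iu := ⟨zero_le_one, le_refl 1⟩
  -- replace qinv by qt in all interval integrals over subsets of [0,1]
  have hq_congr : ∀ a b : ℝ, a ∈ Iu → b ∈ Iu →
      (∫ t in a..b, (qinv F t - Q t)) = ∫ t in a..b, (qt F t - Q t) := by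
    intro a b ha hb
    apply intervalIntegral.integral_congr
    intro t ht
    have ht1 : t ≤ 1 := by
      rcases le_total a b with h | h
      · rw [uIcc_of_le h] at ht; exact ht.2.trans hb.2
      · rw [uIcc_of_ge h] at ht; exact ht.2.trans ha.2
    show qinv F t - Q t = qt F t - Q t
    rw [qt, min_eq_left ht1]
  have hsubII : ∀ a b : ℝ, a ∈ Iu → b ∈ Iu →
      IntervalIntegrable (fun t => qt F t - Q t) volume a b :=
    fun a b ha hb => (hqtII a b).sub (hQII a b ha hb)
  -- key change of variables at y and splitting identities
  have hkey := key_cov F hF Q hQac hQmono hQmaps hQ0 hQbd hode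
  have hkey_y : (∫ u in (0:ℝ)..(Q y), (1 - cdf01 F u)) = ∫ t in (0:ℝ)..y, (qt F t - Q t) := by
    rw [hkey y hy]; exact hq_congr 0 y h0Iu hy
  have hsplit1 : (∫ u in (0:ℝ)..(Q y), (1 - cdf01 F u)) + (∫ u in (Q y)..(1:ℝ), (1 - cdf01 F u))
      = ∫ u in (0:ℝ)..(1:ℝ), (1 - cdf01 F u) :=
    intervalIntegral.integral_add_adjacent_intervals (hcdfII 0 (Q y)) (hcdfII (Q y) 1)
  have hsplit2 : (∫ t in (0:ℝ)..y, (qt F t - Q t)) + (∫ t in y..(1:ℝ), (qt F t - Q t))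
      = ∫ t in (0:ℝ)..(1:ℝ), (qt F t - Q t) :=
    intervalIntegral.integral_add_adjacent_intervals (hsubII 0 y h0Iu hy) (hsubII y 1 hy h1Iu)
  have hsub01 : (∫ t in (0:ℝ)..(1:ℝ), (qt F t - Q t))
      = (∫ t in (0:ℝ)..(1:ℝ), qt F t) - ∫ t in (0:ℝ)..(1:ℝ), Q t :=
    intervalIntegral.integral_sub (hqtII 0 1) (hQII 0 1 h0Iu h1Iu)
  have hQI : (∫ t in (0:ℝ)..(1:ℝ), qt F t) = ∫ t in (0:ℝ)..(1:ℝ), (1 - cdf01 F t) := by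
    rw [← quantile_identity hF hF0]
    apply intervalIntegral.integral_congr
    intro t ht
    rw [uIcc_of_le zero_le_one] at ht
    show qt F t = qinv F t
    rw [qt, min_eq_left ht.2]
  have hgoal2 : (∫ t in y..(1:ℝ), (qinv F t - Q t)) = ∫ t in y..(1:ℝ), (qt F t - Q t) :=
    hq_congr y 1 hy h1Iu
  rw [hgoal2]
  linarith [hkey_y, hsplit1, hsplit2, hsub01, hQI]

end FPA
end
end

section
/- Let F be a probability measure on [0,1] with F({0}) = 0, and let Q* : [0,1] → [0,1] be an absolutely continuous strictly increasing function with Q*(0) = 0, 0 < Q*(y) < F⁻(y) for all y in (0,1], and (Q*)'(y) = (F⁻(y) − Q*(y)) / (1 − F(Q*(y))) for almost every y. Define H* : [0, Q*(1)] → [0,1] by H*(x) = exp( −∫_{(Q*)^{-1}(x)}^1 1/(1 − F(Q*(t))) dt ). Then G := H* ∘ Q* is absolutely continuous on [0,1] and satisfies, for almost every y in [0,1], G'(y) = G(y) / (1 − F(Q*(y))) = G(y) · (Q*)'(y) / (F⁻(y) − Q*(y)). -/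
open MeasureTheory ProbabilityTheory Set

noncomputable section

namespace FPA

lemma primitive_ae_hasDerivAt {f : ℝ → ℝ} (hmeas : Measurable f)
    (hint : Integrable f) (h0 : ∀ t, 0 ≤ f t) :
    ∀ᵐ x ∂(volume : Measure ℝ), HasDerivAt (fun x => ∫ t in (0:ℝ)..x, f t) (f x) x := by
  set E : ℝ → ℝ := fun x => ∫ t in (0:ℝ)..x, f t with hE
  have hfi : ∀ a b : ℝ, IntervalIntegrable f volume a b := fun a b => hint.intervalIntegrable
  have hEdiff : ∀ a b : ℝ, E b - E a = ∫ t in a..b, f t := by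
    intro a b
    have := intervalIntegral.integral_add_adjacent_intervals (hfi 0 a) (hfi a b)
    simp only [hE]
    linarith
  have hEmono : Monotone E := by
    intro a b hab
    have h1 := hEdiff a b
    have h2 : 0 ≤ ∫ t in a..b, f t :=
      intervalIntegral.integral_nonneg hab (fun u _ => h0 u)
    linarith
  have hEcont : Continuous E := intervalIntegral.continuous_primitive hfi 0
  set S : StieltjesFunction ℝ :=
    { toFun := E, mono' := hEmono,
      right_continuous' := fun x => hEcont.continuousWithinAt } with hS
  have hg : Measurable fun t => ENNReal.ofReal (f t) := hmeas.ennreal_ofReal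
  have hmap : S.measure = volume.withDensity (fun t => ENNReal.ofReal (f t)) := by
    refine Measure.ext_of_Ioc _ _ (fun a b hab => ?_)
    rw [StieltjesFunction.measure_Ioc, withDensity_apply _ measurableSet_Ioc]
    have h1 : ENNReal.ofReal (∫ t in Ioc a b, f t) =
        ∫⁻ t in Ioc a b, ENNReal.ofReal (f t) :=
      ofReal_integral_eq_lintegral_ofReal hint.integrableOn (ae_of_all _ h0)
    rw [← h1]
    congr 1
    have h2 : (∫ t in a..b, f t) = ∫ t in Ioc a b, f t :=
      intervalIntegral.integral_of_le hab.le
    have h3 : S b - S a = E b - E a := rfl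
    rw [h3, hEdiff a b, h2]
  filter_upwards [S.ae_hasDerivAt,
    Measure.rnDeriv_withDensity (volume : Measure ℝ) hg] with x h1 h2
  rw [hmap, h2, ENNReal.toReal_ofReal (h0 x)] at h1
  exact h1

lemma exp_primitive_block {f : ℝ → ℝ} {M B : ℝ}
    (hfi : ∀ a b : ℝ, IntervalIntegrable f volume a b)
    (h0 : ∀ t, 0 ≤ f t) (hM : ∀ t, f t ≤ M)
    {s t : ℝ} (hst : s ≤ t)
    (hB : (∫ u in (0:ℝ)..t, f u) ≤ B) :
    |(Real.exp (∫ u in (0:ℝ)..t, f u) - Real.exp (∫ u in (0:ℝ)..s, f u))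
        - ∫ u in s..t, Real.exp (∫ v in (0:ℝ)..u, f v) * f u|
      ≤ Real.exp B * M ^ 2 * (t - s) ^ 2 := by
  set E : ℝ → ℝ := fun x => ∫ v in (0:ℝ)..x, f v with hEdef
  have hEdiff : ∀ a b : ℝ, E b - E a = ∫ u in a..b, f u := by
    intro a b
    have := intervalIntegral.integral_add_adjacent_intervals (hfi 0 a) (hfi a b)
    simp only [hEdef]; linarith
  have hEmono : Monotone E := by
    intro a b hab
    have h1 := hEdiff a b
    have h2 : 0 ≤ ∫ u in a..b, f u := intervalIntegral.integral_nonneg hab (fun u _ => h0 u)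
    linarith
  have hEcont : Continuous E := intervalIntegral.continuous_primitive hfi 0
  set Δ : ℝ := E t - E s with hΔdef
  have hΔ0 : 0 ≤ Δ := by
    have := hEdiff s t
    have h2 : 0 ≤ ∫ u in s..t, f u := intervalIntegral.integral_nonneg hst (fun u _ => h0 u)
    linarith
  have hΔM : Δ ≤ M * (t - s) := by
    have h1 : (∫ u in s..t, f u) ≤ ∫ u in s..t, M := by
      apply intervalIntegral.integral_mono_on hst (hfi s t) intervalIntegrable_const
      exact fun x _ => hM x
    rw [intervalIntegral.integral_const, smul_eq_mul] at h1
    have := hEdiff s t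
    linarith
  -- integrability of the integrand
  have hint : ∀ a b : ℝ, IntervalIntegrable (fun u => Real.exp (E u) * f u) volume a b :=
    fun a b => (hfi a b).continuousOn_mul (hEcont.rexp.continuousOn)
  -- bounds on the integral
  have hlow : Real.exp (E s) * Δ ≤ ∫ u in s..t, Real.exp (E u) * f u := by
    have h1 : (∫ u in s..t, Real.exp (E s) * f u) ≤ ∫ u in s..t, Real.exp (E u) * f u := by
      apply intervalIntegral.integral_mono_on hst ((hfi s t).const_mul _) (hint s t)
      intro x hx
      exact mul_le_mul_of_nonneg_right (Real.exp_le_exp.2 (hEmono hx.1)) (h0 x)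
    rw [intervalIntegral.integral_const_mul] at h1
    have := hEdiff s t
    calc Real.exp (E s) * Δ = Real.exp (E s) * ∫ u in s..t, f u := by rw [hΔdef, this]
    _ ≤ _ := h1
  have hhigh : (∫ u in s..t, Real.exp (E u) * f u) ≤ Real.exp (E t) * Δ := by
    have h1 : (∫ u in s..t, Real.exp (E u) * f u) ≤ ∫ u in s..t, Real.exp (E t) * f u := by
      apply intervalIntegral.integral_mono_on hst (hint s t) ((hfi s t).const_mul _)
      intro x hx
      exact mul_le_mul_of_nonneg_right (Real.exp_le_exp.2 (hEmono hx.2)) (h0 x)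
    rw [intervalIntegral.integral_const_mul] at h1
    have := hEdiff s t
    calc (∫ u in s..t, Real.exp (E u) * f u) ≤ Real.exp (E t) * ∫ u in s..t, f u := h1
    _ = Real.exp (E t) * Δ := by rw [hΔdef, this]
  -- bounds on the exponential difference
  have hexplow : Real.exp (E s) * Δ ≤ Real.exp (E t) - Real.exp (E s) := by
    have h1 : Δ + 1 ≤ Real.exp Δ := Real.add_one_le_exp Δ
    have h2 : Real.exp (E t) = Real.exp (E s) * Real.exp Δ := by
      rw [← Real.exp_add]; congr 1; simp [hΔdef]
    nlinarith [Real.exp_pos (E s)]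
  have hexphigh : Real.exp (E t) - Real.exp (E s) ≤ Real.exp (E t) * Δ := by
    have h1 : -Δ + 1 ≤ Real.exp (-Δ) := Real.add_one_le_exp (-Δ)
    have h2 : Real.exp (E s) = Real.exp (E t) * Real.exp (-Δ) := by
      rw [← Real.exp_add]; congr 1; simp [hΔdef]
    nlinarith [Real.exp_pos (E t)]
  have hEtB : Real.exp (E t) ≤ Real.exp B := Real.exp_le_exp.2 hB
  have hM0 : 0 ≤ M := le_trans (h0 0) (hM 0)
  have habs : |(Real.exp (E t) - Real.exp (E s)) - ∫ u in s..t, Real.exp (E u) * f u|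
      ≤ Real.exp (E t) * Δ - Real.exp (E s) * Δ := by
    rw [abs_le]
    constructor <;> nlinarith
  have hfinal : Real.exp (E t) * Δ - Real.exp (E s) * Δ ≤ Real.exp B * M ^ 2 * (t - s) ^ 2 := by
    have h3 : Real.exp (E t) - Real.exp (E s) ≤ Real.exp B * Δ := by
      nlinarith [Real.exp_pos (E t)]
    have h4 : Real.exp (E t) * Δ - Real.exp (E s) * Δ = (Real.exp (E t) - Real.exp (E s)) * Δ := by
      ring
    have h5 : Δ * Δ ≤ (M * (t - s)) * (M * (t - s)) :=
      mul_le_mul hΔM hΔM hΔ0 (by nlinarith)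
    have h6 := mul_le_mul_of_nonneg_right h3 hΔ0
    nlinarith [Real.exp_pos B]
  exact le_trans habs hfinal

lemma exp_primitive_ftc {f : ℝ → ℝ} {M : ℝ}
    (hfi : ∀ a b : ℝ, IntervalIntegrable f volume a b)
    (h0 : ∀ t, 0 ≤ f t) (hM : ∀ t, f t ≤ M)
    {x : ℝ} (hx : 0 ≤ x) :
    Real.exp (∫ u in (0:ℝ)..x, f u) - 1
      = ∫ u in (0:ℝ)..x, Real.exp (∫ v in (0:ℝ)..u, f v) * f u := by
  set E : ℝ → ℝ := fun y => ∫ v in (0:ℝ)..y, f v with hEdef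
  have hEmono : Monotone E := by
    intro a b hab
    have h1 := intervalIntegral.integral_add_adjacent_intervals (hfi 0 a) (hfi a b)
    have h2 : 0 ≤ ∫ u in a..b, f u := intervalIntegral.integral_nonneg hab (fun u _ => h0 u)
    simp only [hEdef]
    linarith
  have hEcont : Continuous E := intervalIntegral.continuous_primitive hfi 0
  have hint : ∀ a b : ℝ, IntervalIntegrable (fun u => Real.exp (E u) * f u) volume a b :=
    fun a b => (hfi a b).continuousOn_mul (hEcont.rexp.continuousOn)
  have hE0 : E 0 = 0 := intervalIntegral.integral_same
  set D : ℝ := (Real.exp (E x) - 1) - ∫ u in (0:ℝ)..x, Real.exp (E u) * f u with hDdef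
  have key : ∀ n : ℕ, 0 < n → |D| ≤ Real.exp (E x) * M ^ 2 * x ^ 2 / n := by
    intro n hn
    have hn' : (n : ℝ) ≠ 0 := Nat.cast_ne_zero.2 hn.ne'
    have hnpos : (0 : ℝ) < n := Nat.cast_pos.2 hn
    set a : ℕ → ℝ := fun i => (i : ℝ) * x / n with hadef
    have ha0 : a 0 = 0 := by simp [hadef]
    have han : a n = x := by simp only [hadef]; exact mul_div_cancel_left₀ x hn'
    have hamono : ∀ i j : ℕ, i ≤ j → a i ≤ a j := by
      intro i j hij
      have : (i : ℝ) ≤ j := Nat.cast_le.2 hij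
      simp only [hadef]
      have h2 : (i : ℝ) * x ≤ (j : ℝ) * x := mul_le_mul_of_nonneg_right this hx
      have h3 := mul_le_mul_of_nonneg_right h2 (inv_nonneg.2 hnpos.le)
      simpa [div_eq_mul_inv] using h3
    have hax : ∀ k : ℕ, k ≤ n → a k ≤ x := by
      intro k hk
      have := hamono k n hk
      rwa [han] at this
    have hstep : ∀ k : ℕ, a (k + 1) - a k = x / n := by
      intro k
      simp only [hadef]
      push_cast
      field_simp
      ring
    have hsplit : (∑ k ∈ Finset.range n, ∫ u in (a k)..(a (k+1)), Real.exp (E u) * f u)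
        = ∫ u in (a 0)..(a n), Real.exp (E u) * f u :=
      intervalIntegral.sum_integral_adjacent_intervals (fun k _ => hint _ _)
    have htel : (∑ k ∈ Finset.range n, (Real.exp (E (a (k+1))) - Real.exp (E (a k))))
        = Real.exp (E (a n)) - Real.exp (E (a 0)) :=
      Finset.sum_range_sub (fun i => Real.exp (E (a i))) n
    have hD : D = ∑ k ∈ Finset.range n,
        ((Real.exp (E (a (k+1))) - Real.exp (E (a k)))
          - ∫ u in (a k)..(a (k+1)), Real.exp (E u) * f u) := by
      rw [Finset.sum_sub_distrib, htel, hsplit, ha0, han, hE0, Real.exp_zero]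
    have hbound : ∀ k ∈ Finset.range n,
        |(Real.exp (E (a (k+1))) - Real.exp (E (a k)))
          - ∫ u in (a k)..(a (k+1)), Real.exp (E u) * f u|
        ≤ Real.exp (E x) * M ^ 2 * (x / n) ^ 2 := by
      intro k hk
      have hk' : k + 1 ≤ n := Nat.succ_le_of_lt (Finset.mem_range.1 hk)
      have h1 : a k ≤ a (k + 1) := hamono k (k+1) (Nat.le_succ k)
      have h2 : E (a (k+1)) ≤ E x := hEmono (hax (k+1) hk')
      have h3 := exp_primitive_block hfi h0 hM h1 (le_trans (le_of_eq rfl) h2)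
      rw [hstep k] at h3
      exact h3
    calc |D| ≤ ∑ k ∈ Finset.range n,
        |(Real.exp (E (a (k+1))) - Real.exp (E (a k)))
          - ∫ u in (a k)..(a (k+1)), Real.exp (E u) * f u| := by
          rw [hD]; exact Finset.abs_sum_le_sum_abs _ _
      _ ≤ ∑ k ∈ Finset.range n, Real.exp (E x) * M ^ 2 * (x / n) ^ 2 :=
          Finset.sum_le_sum hbound
      _ = n * (Real.exp (E x) * M ^ 2 * (x / n) ^ 2) := by
          rw [Finset.sum_const, Finset.card_range, nsmul_eq_mul]
      _ = Real.exp (E x) * M ^ 2 * x ^ 2 / n := by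
          field_simp
  have hten : Filter.Tendsto (fun n : ℕ => Real.exp (E x) * M ^ 2 * x ^ 2 / n)
      Filter.atTop (nhds 0) := tendsto_const_div_atTop_nhds_zero_nat _
  have hD0 : |D| ≤ 0 := by
    refine ge_of_tendsto hten ?_
    filter_upwards [Filter.eventually_atTop.2 ⟨1, fun n hn => hn⟩] with n hn
    exact key n hn
  have : D = 0 := abs_eq_zero.1 (le_antisymm hD0 (abs_nonneg D))
  simp only [hDdef] at this
  linarith



/-- Lemma: the candidate worst-case bid distribution: with `Q*` as in the
ODE lemma and `H*(x) = exp(−∫_{(Q*)⁻¹(x)}^1 dt/(1 − F(Q*(t))))`, the function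
`G := H* ∘ Q*` is absolutely continuous on `[0,1]` and satisfies, for a.e. `y ∈ [0,1]`,
`G'(y) = G(y)/(1 − F(Q*(y))) = G(y)·(Q*)'(y)/(F⁻(y) − Q*(y))`. -/
theorem worst_case_bid_cdf_ode
    (F : Measure ℝ) (hF : IsProbOn F) (hF0 : F {0} = 0)
    (Q : ℝ → ℝ) (hQac : AbsContOn01 Q) (hQmono : StrictMonoOn Q Iu)
    (hQmaps : MapsTo Q Iu Iu) (hQ0 : Q 0 = 0)
    (hQbd : ∀ y ∈ Set.Ioc (0:ℝ) 1, 0 < Q y ∧ Q y < qinv F y)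
    (hode : ∀ᵐ y ∂(volume.restrict Iu),
      HasDerivAt Q ((qinv F y - Q y) / (1 - cdf01 F (Q y))) y) :
    AbsContOn01 (fun y => Hstar F Q (Q y))
      ∧ ∀ᵐ y ∂(volume.restrict Iu),
          HasDerivAt (fun y => Hstar F Q (Q y))
            (Hstar F Q (Q y) / (1 - cdf01 F (Q y))) y
          ∧ Hstar F Q (Q y) / (1 - cdf01 F (Q y))
              = Hstar F Q (Q y) * deriv Q y / (qinv F y - Q y) := by
  haveI : IsProbabilityMeasure F := hF.1
  have cdf_mono : Monotone (cdf01 F) := fun a b hab =>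
    ENNReal.toReal_mono (measure_ne_top F _) (measure_mono (Iic_subset_Iic.2 hab))
  have h0Iu : (0:ℝ) ∈ Iu := ⟨le_refl 0, zero_le_one⟩
  have h1Iu : (1:ℝ) ∈ Iu := ⟨zero_le_one, le_refl 1⟩
  have hc : cdf01 F (Q 1) < 1 := by
    have h1 : Q 1 < qinv F 1 := (hQbd 1 ⟨zero_lt_one, le_refl 1⟩).2
    by_contra hcon
    push_neg at hcon
    have hmem : Q 1 ∈ {x | x ∈ Iu ∧ (1:ℝ) ≤ cdf01 F x} := ⟨hQmaps h1Iu, hcon⟩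
    have hbdd : BddBelow {x | x ∈ Iu ∧ (1:ℝ) ≤ cdf01 F x} := ⟨0, fun x hx => hx.1.1⟩
    have h2 := csInf_le hbdd hmem
    rw [qinv] at h1
    linarith
  have hcdfle : ∀ t ∈ Iu, cdf01 F (Q t) ≤ cdf01 F (Q 1) := fun t ht =>
    cdf_mono (hQmono.monotoneOn ht h1Iu ht.2)
  obtain ⟨g, hgint, hgid⟩ := hQac
  have hQcont : ContinuousOn Q Iu := by
    have h2 := intervalIntegral.continuousOn_primitive_interval' hgint
      (left_mem_uIcc (a := (0:ℝ)) (b := 1))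
    have h1 : ContinuousOn (fun x => Q 0 + ∫ t in (0:ℝ)..x, g t) Iu := by
      apply continuousOn_const.add
      rw [uIcc_of_le zero_le_one] at h2
      exact h2
    exact h1.congr (fun x hx => hgid x hx)
  set clamp : ℝ → ℝ := fun x => max 0 (min x 1) with hclampdef
  have hclampcont : Continuous clamp := continuous_const.max (continuous_id.min continuous_const)
  have hclampmem : ∀ x, clamp x ∈ Iu := fun x =>
    ⟨le_max_left _ _, max_le zero_le_one (min_le_right _ _)⟩
  have hclampeq : ∀ t ∈ Iu, clamp t = t := fun t ht => by
    simp only [hclampdef]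
    rw [min_eq_left ht.2, max_eq_right ht.1]
  set q : ℝ → ℝ := fun x => Q (clamp x) with hqdef
  have hqcont : Continuous q := hQcont.comp_continuous hclampcont hclampmem
  have hqeq : ∀ t ∈ Iu, q t = Q t := fun t ht => by
    simp only [hqdef]
    rw [hclampeq t ht]
  set M : ℝ := (1 - cdf01 F (Q 1))⁻¹ with hMdef
  have hMcPos : 0 < 1 - cdf01 F (Q 1) := by linarith
  set f₀ : ℝ → ℝ := Iu.indicator (fun t => (1 - cdf01 F (q t))⁻¹) with hf₀def
  have hden : ∀ t ∈ Iu, 0 < 1 - cdf01 F (Q t) := fun t ht => by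
    have := hcdfle t ht; linarith
  have hf₀eq : ∀ t ∈ Iu, f₀ t = (1 - cdf01 F (Q t))⁻¹ := fun t ht => by
    simp only [hf₀def, Set.indicator_of_mem ht, hqeq t ht]
  have hboundIu : ∀ t ∈ Iu, (1 - cdf01 F (Q t))⁻¹ ≤ M := by
    intro t ht
    rw [hMdef]
    exact inv_anti₀ hMcPos (by have := hcdfle t ht; linarith)
  have hf₀0 : ∀ t, 0 ≤ f₀ t := by
    intro t
    by_cases ht : t ∈ Iu
    · rw [hf₀eq t ht]; exact inv_nonneg.2 (hden t ht).le
    · simp [hf₀def, Set.indicator_of_notMem ht]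
  have hf₀M : ∀ t, f₀ t ≤ M := by
    intro t
    by_cases ht : t ∈ Iu
    · rw [hf₀eq t ht]; exact hboundIu t ht
    · simp only [hf₀def, Set.indicator_of_notMem ht]; exact inv_nonneg.2 hMcPos.le
  have hIuMeas : MeasurableSet Iu := measurableSet_Icc
  have hinnermeas : Measurable (fun t => (1 - cdf01 F (q t))⁻¹) :=
    (measurable_const.sub (cdf_mono.measurable.comp hqcont.measurable)).inv
  have hf₀meas : Measurable f₀ := hinnermeas.indicator hIuMeas
  have hf₀int : Integrable f₀ := by
    rw [hf₀def, integrable_indicator_iff hIuMeas]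
    apply Measure.integrableOn_of_bounded (M := M)
    · show volume Iu ≠ ⊤
      simp [Iu, Real.volume_Icc]
    · exact hinnermeas.aestronglyMeasurable
    · filter_upwards [ae_restrict_mem hIuMeas] with t ht
      rw [hqeq t ht, Real.norm_eq_abs, abs_of_nonneg (inv_nonneg.2 (hden t ht).le)]
      exact hboundIu t ht
  have hfi : ∀ a b : ℝ, IntervalIntegrable f₀ volume a b := fun a b => hf₀int.intervalIntegrable
  set E : ℝ → ℝ := fun y => ∫ t in (0:ℝ)..y, f₀ t with hEdef
  have hE0 : E 0 = 0 := intervalIntegral.integral_same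
  have hEdiff : ∀ a b : ℝ, E b - E a = ∫ t in a..b, f₀ t := by
    intro a b
    have := intervalIntegral.integral_add_adjacent_intervals (hfi 0 a) (hfi a b)
    simp only [hEdef]
    linarith
  have hEcont : Continuous E := intervalIntegral.continuous_primitive hfi 0
  have hGiu : ∀ y ∈ Iu, Hstar F Q (Q y) = Real.exp (E y - E 1) := by
    intro y hy
    simp only [Hstar]
    rw [hQmono.injOn.leftInvOn_invFunOn hy]
    have hcongr : (∫ t in y..(1:ℝ), 1 / (1 - cdf01 F (Q t))) = ∫ t in y..(1:ℝ), f₀ t := by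
      apply intervalIntegral.integral_congr
      intro t ht
      rw [uIcc_of_le hy.2] at ht
      have htIu : t ∈ Iu := ⟨le_trans hy.1 ht.1, ht.2⟩
      show (1:ℝ) / (1 - cdf01 F (Q t)) = f₀ t
      rw [hf₀eq t htIu, one_div]
    rw [hcongr, ← hEdiff y 1]
    congr 1
    ring
  have hkey : ∀ x : ℝ, 0 ≤ x → Real.exp (E x) - 1 = ∫ u in (0:ℝ)..x, Real.exp (E u) * f₀ u :=
    fun x hx => exp_primitive_ftc hfi hf₀0 hf₀M hx
  have hintexp : ∀ a b : ℝ,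
      IntervalIntegrable (fun u => Real.exp (E u - E 1) * f₀ u) volume a b :=
    fun a b => (hfi a b).continuousOn_mul (((hEcont.sub continuous_const).rexp).continuousOn)
  constructor
  · refine ⟨fun u => Real.exp (E u - E 1) * f₀ u, hintexp 0 1, ?_⟩
    intro x hx
    show Hstar F Q (Q x) = Hstar F Q (Q 0) + ∫ t in (0:ℝ)..x, Real.exp (E t - E 1) * f₀ t
    rw [hGiu x hx, hGiu 0 h0Iu]
    have h1 : ∀ u, Real.exp (E u - E 1) * f₀ u
        = Real.exp (-E 1) * (Real.exp (E u) * f₀ u) := by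
      intro u; rw [Real.exp_sub, Real.exp_neg]; ring
    calc Real.exp (E x - E 1)
        = Real.exp (-E 1) + Real.exp (-E 1) * (Real.exp (E x) - 1) := by
          rw [Real.exp_sub, Real.exp_neg]; field_simp; ring
      _ = Real.exp (E 0 - E 1) + ∫ t in (0:ℝ)..x, Real.exp (E t - E 1) * f₀ t := by
          rw [hE0, zero_sub]
          congr 1
          simp only [h1]
          rw [intervalIntegral.integral_const_mul, ← hkey x hx.1]
  · have hE' := primitive_ae_hasDerivAt hf₀meas hf₀int hf₀0
    have hmem01 : ∀ᵐ y ∂(volume.restrict Iu), y ∈ Ioo (0:ℝ) 1 := by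
      have hcnt : (({0, 1} : Set ℝ)).Countable :=
        (Set.countable_singleton 1).insert 0
      have h1 : ∀ᵐ y ∂(volume : Measure ℝ), y ∉ ({0, 1} : Set ℝ) :=
        hcnt.ae_notMem volume
      filter_upwards [ae_restrict_mem hIuMeas, ae_restrict_of_ae h1] with y hy hy2
      simp only [Set.mem_insert_iff, Set.mem_singleton_iff, not_or] at hy2
      exact ⟨lt_of_le_of_ne hy.1 (Ne.symm hy2.1), lt_of_le_of_ne hy.2 hy2.2⟩
    filter_upwards [hmem01, ae_restrict_of_ae hE', hode] with y hy hEy hQy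
    have hyIu : y ∈ Iu := ⟨hy.1.le, hy.2.le⟩
    have hqy : 0 < 1 - cdf01 F (Q y) := hden y hyIu
    have hf₀y : f₀ y = (1 - cdf01 F (Q y))⁻¹ := hf₀eq y hyIu
    have hGy : Hstar F Q (Q y) = Real.exp (E y - E 1) := hGiu y hyIu
    have hEy' : HasDerivAt E (f₀ y) y := hEy
    have hd0 : HasDerivAt (fun z => Real.exp (E z - E 1)) (Real.exp (E y - E 1) * f₀ y) y := by
      have h2 := (hEy'.sub_const (E 1)).exp
      simpa using h2
    have hEq : (fun z => Hstar F Q (Q z)) =ᶠ[nhds y] (fun z => Real.exp (E z - E 1)) := by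
      filter_upwards [Ioo_mem_nhds hy.1 hy.2] with z hz
      exact hGiu z ⟨hz.1.le, hz.2.le⟩
    have hd : HasDerivAt (fun z => Hstar F Q (Q z)) (Real.exp (E y - E 1) * f₀ y) y :=
      hd0.congr_of_eventuallyEq hEq
    constructor
    · rw [hGy, div_eq_mul_inv, ← hf₀y]
      exact hd
    · have hderivQ : deriv Q y = (qinv F y - Q y) / (1 - cdf01 F (Q y)) := hQy.deriv
      have hA : 0 < qinv F y - Q y := sub_pos.2 (hQbd y ⟨hy.1, hy.2.le⟩).2
      rw [hderivQ]
      field_simp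

end FPA
end
end
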